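/- Let ρ and σ be density operators on a finite-dimensional Hilbert space with supp ρ ⊆ supp σ, and let t(λ) = Tr[(ρ − λσ)_+] for λ ≥ 0, where (·)_+ denotes the positive part of a Hermitian operator. Then t is continuous and strictly decreasing on the interval [0, 2^{D_max(ρ||σ)}], with t(0) = 1 and t(2^{D_max(ρ||σ)}) = 0, so its range on this interval is [0,1]. -/

import Mathlib

open Matrix Filter
open scoped ComplexOrder

attribute [local instance] Classical.propDecidable

noncomputable section

namespace QComb

/-- Dimension of the `j`-th factor of the partial tensor product keeping only
the first `n` factors (the remaining factors are replaced by trivial spaces). -/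
def cut {N : ℕ} (d : Fin N → ℕ) (n : ℕ) (j : Fin N) : ℕ := if j.val < n then d j else 1

/-- Index set of the tensor product of the first `n` factors of the family of
Hilbert spaces `ℂ^{d j}`, `j : Fin N`. -/
def CutIdx {N : ℕ} (d : Fin N → ℕ) (n : ℕ) : Type := ∀ j : Fin N, Fin (cut d n j)

instance {N : ℕ} (d : Fin N → ℕ) (n : ℕ) : Fintype (CutIdx d n) := Pi.instFintype

instance {N : ℕ} (d : Fin N → ℕ) (n : ℕ) : DecidableEq (CutIdx d n) :=
  fun a b => Fintype.decidablePiFintype a b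

/-- Operators on the tensor product `⊗_{j<n} (H_j^out ⊗ H_j^in)` where
`H_j^out = ℂ^{dO j}` and `H_j^in = ℂ^{dI j}`. -/
abbrev CMat {N : ℕ} (dO dI : Fin N → ℕ) (n : ℕ) : Type :=
  Matrix (CutIdx dO n × CutIdx dI n) (CutIdx dO n × CutIdx dI n) ℂ

/-- Extend an index on the first `n` factors by a value `k` in the `n`-th factor. -/
def extendAt {N : ℕ} (d : Fin N → ℕ) (n : Fin N) (x : CutIdx d n.val) (k : Fin (d n)) :
    CutIdx d (n.val + 1) := fun j =>
  if h : j.val < n.val then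
    Fin.cast (show cut d n.val j = cut d (n.val + 1) j by
      simp [cut, h, Nat.lt_succ_of_lt h]) (x j)
  else if h2 : j.val < n.val + 1 then
    Fin.cast (show d n = cut d (n.val + 1) j by
      have hje : j = n := Fin.ext (by omega)
      subst hje; simp [cut, h2]) k
  else
    Fin.cast (show cut d n.val j = cut d (n.val + 1) j by simp [cut, h, h2]) (x j)

/-- Restrict an index on the first `n+1` factors to the first `n` factors. -/
def restrictAt {N : ℕ} (d : Fin N → ℕ) (n : Fin N) (x : CutIdx d (n.val + 1)) :
    CutIdx d n.val := fun j =>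
  if h : j.val < n.val then
    Fin.cast (show cut d (n.val + 1) j = cut d n.val j by
      simp [cut, h, Nat.lt_succ_of_lt h]) (x j)
  else
    ⟨0, by simp only [cut, if_neg h]; omega⟩

/-- The component of an index on the first `n+1` factors in the `n`-th factor. -/
def componentAt {N : ℕ} (d : Fin N → ℕ) (n : Fin N) (x : CutIdx d (n.val + 1)) :
    Fin (d n) :=
  Fin.cast (show cut d (n.val + 1) n = d n by simp [cut]) (x n)

/-- Partial trace over the `n`-th output space. -/
def ptraceO {N : ℕ} (dO : Fin N → ℕ) (n : Fin N) {β : Type} [Fintype β]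
    (M : Matrix (CutIdx dO (n.val + 1) × β) (CutIdx dO (n.val + 1) × β) ℂ) :
    Matrix (CutIdx dO n.val × β) (CutIdx dO n.val × β) ℂ :=
  fun p q => ∑ k : Fin (dO n), M (extendAt dO n p.1 k, p.2) (extendAt dO n q.1 k, q.2)

/-- Partial trace over the `n`-th input space. -/
def ptraceI {N : ℕ} (dI : Fin N → ℕ) (n : Fin N) {α : Type} [Fintype α]
    (M : Matrix (α × CutIdx dI (n.val + 1)) (α × CutIdx dI (n.val + 1)) ℂ) :
    Matrix (α × CutIdx dI n.val) (α × CutIdx dI n.val) ℂ :=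
  fun p q => ∑ k : Fin (dI n), M (p.1, extendAt dI n p.2 k) (q.1, extendAt dI n q.2 k)

/-- Tensoring with the identity on the `n`-th output space. -/
def idTensorO {N : ℕ} (dO : Fin N → ℕ) (n : Fin N) {β : Type}
    (M : Matrix (CutIdx dO n.val × β) (CutIdx dO n.val × β) ℂ) :
    Matrix (CutIdx dO (n.val + 1) × β) (CutIdx dO (n.val + 1) × β) ℂ :=
  fun p q => (if componentAt dO n p.1 = componentAt dO n q.1 then (1 : ℂ) else 0) *
    M (restrictAt dO n p.1, p.2) (restrictAt dO n q.1, q.2)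

/-- Tensoring with the identity on the `n`-th input space. -/
def idTensorI {N : ℕ} (dI : Fin N → ℕ) (n : Fin N) {α : Type}
    (M : Matrix (α × CutIdx dI n.val) (α × CutIdx dI n.val) ℂ) :
    Matrix (α × CutIdx dI (n.val + 1)) (α × CutIdx dI (n.val + 1)) ℂ :=
  fun p q => (if componentAt dI n p.2 = componentAt dI n q.2 then (1 : ℂ) else 0) *
    M (p.1, restrictAt dI n p.2) (q.1, restrictAt dI n q.2)

/-- Transport an operator along an equality of the number of kept factors. -/
def castCMat {N : ℕ} (dO dI : Fin N → ℕ) {a b : ℕ} (h : a = b) (M : CMat dO dI a) :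
    CMat dO dI b := h ▸ M

/-- `C` is a quantum comb on `⊗_{j=1}^N (H_j^out ⊗ H_j^in)`:
it is positive semidefinite and admits a chain `C⁽ⁿ⁾` of positive semidefinite operators with
`C⁽ᴺ⁾ = C`, `C⁽⁰⁾ = 1` and `Tr_{H_n^out} C⁽ⁿ⁾ = I_{H_n^in} ⊗ C⁽ⁿ⁻¹⁾`. -/
def IsQuantumComb {N : ℕ} (dO dI : Fin N → ℕ) (C : CMat dO dI N) : Prop :=
  C.PosSemidef ∧ ∃ Cn : (n : ℕ) → CMat dO dI n,
    (∀ n ≤ N, (Cn n).PosSemidef) ∧ Cn N = C ∧ Cn 0 = 1 ∧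
    ∀ n : Fin N, ptraceO dO n (Cn (n.val + 1)) = idTensorI dI n (Cn n.val)

/-- `Γ` is a dual comb: `Γ = I_{H_N^out} ⊗ Γ⁽ᴺ⁾` for a chain of positive semidefinite operators
`Γ⁽ⁿ⁾` on `H_n^in ⊗ (⊗_{j<n} (H_j^out ⊗ H_j^in))` with
`Tr_{H_n^in} Γ⁽ⁿ⁾ = I_{H_{n-1}^out} ⊗ Γ⁽ⁿ⁻¹⁾` and `Tr_{H_1^in} Γ⁽¹⁾ = 1`.
Here `G m` plays the role of `Γ⁽ᵐ⁺¹⁾`. -/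
def IsDualComb {N : ℕ} (dO dI : Fin N → ℕ) (Γ : CMat dO dI N) : Prop :=
  ∃ G : (m : ℕ) → Matrix (CutIdx dO m × CutIdx dI (m + 1)) (CutIdx dO m × CutIdx dI (m + 1)) ℂ,
    (∀ m < N, (G m).PosSemidef) ∧
    (∀ h0 : 0 < N, ptraceI dI ⟨0, h0⟩ (G 0) = 1) ∧
    (∀ m, ∀ h : m + 1 < N,
      ptraceI dI ⟨m + 1, h⟩ (G (m + 1)) = idTensorO dO ⟨m, Nat.lt_of_succ_lt h⟩ (G m)) ∧
    (∀ m, ∀ h : m + 1 = N,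
      Γ = castCMat dO dI h (idTensorO dO ⟨m, h ▸ Nat.lt_succ_self m⟩ (G m))) ∧
    (N = 0 → Γ = 1)

/-- The square root of a positive semidefinite matrix, as `Matrix.PosSemidef.sqrt` was defined
in the older Mathlib (removed since). -/
def psdSqrt {𝕜 : Type*} [RCLike 𝕜] {n : Type*} [Fintype n] [DecidableEq n] {A : Matrix n n 𝕜}
    (hA : A.PosSemidef) : Matrix n n 𝕜 :=
  hA.1.eigenvectorUnitary.1 * diagonal ((↑) ∘ (Real.sqrt ·) ∘ hA.1.eigenvalues) *
    (star hA.1.eigenvectorUnitary : Matrix n n 𝕜)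

/-- The trace norm `‖A‖₁ = Tr √(AᴴA)`. -/
def traceNorm {ι : Type} [Fintype ι] [DecidableEq ι] (A : Matrix ι ι ℂ) : ℝ :=
  ((psdSqrt (Matrix.posSemidef_conjTranspose_mul_self A)).trace).re

/-- Square root of a positive semidefinite matrix (junk value `0` otherwise). -/
def msqrt {ι : Type} [Fintype ι] [DecidableEq ι] (A : Matrix ι ι ℂ) : Matrix ι ι ℂ :=
  if h : A.PosSemidef then psdSqrt h else 0

/-- Positive part `A₊` of a Hermitian matrix (junk value `0` otherwise). -/
def posPartMat {ι : Type} [Fintype ι] [DecidableEq ι] (A : Matrix ι ι ℂ) : Matrix ι ι ℂ :=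
  if h : A.IsHermitian then h.cfc (fun x => max x 0) else 0

/-- Matrix logarithm in base 2 of a Hermitian matrix via the functional calculus
(junk value `0` otherwise). -/
def mlog {ι : Type} [Fintype ι] [DecidableEq ι] (A : Matrix ι ι ℂ) : Matrix ι ι ℂ :=
  if h : A.IsHermitian then h.cfc (Real.logb 2) else 0

/-- Quantum relative entropy `D(ρ‖σ) = Tr[ρ (log ρ - log σ)]` (base-2 logarithm). -/
def relEnt {ι : Type} [Fintype ι] [DecidableEq ι] (ρ σ : Matrix ι ι ℂ) : ℝ :=
  ((ρ * (mlog ρ - mlog σ)).trace).re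

/-- Support inclusion `supp A ⊆ supp B` (ranges of the associated linear maps). -/
def suppSubset {ι : Type} [Fintype ι] [DecidableEq ι] (A B : Matrix ι ι ℂ) : Prop :=
  LinearMap.range (Matrix.toLin' A) ≤ LinearMap.range (Matrix.toLin' B)

/-- The feasible set of the max-relative entropy `D_max(A‖B)`. -/
def DmaxSet {ι : Type} [Fintype ι] [DecidableEq ι] (A B : Matrix ι ι ℂ) : Set ℝ :=
  {lam : ℝ | 0 ≤ lam ∧ ((lam : ℂ) • B - A).PosSemidef}

/-- Max-relative entropy `D_max(A‖B) = log min {λ ≥ 0 | λB - A ≥ 0}`, equal to `⊤`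
when no such `λ` exists (i.e. when `supp A ⊄ supp B`). -/
def Dmax {ι : Type} [Fintype ι] [DecidableEq ι] (A B : Matrix ι ι ℂ) : EReal :=
  if (DmaxSet A B).Nonempty then ((Real.logb 2 (sInf (DmaxSet A B)) : ℝ) : EReal) else ⊤

/-- Smooth max-relative entropy of quantum combs:
`D_max^ε(C₀‖C₁) = min { D_max(C̃‖C₁) | C̃ a quantum comb, ½‖C̃ - C₀‖₁ ≤ ε }`. -/
def DmaxSmoothComb {N : ℕ} (dO dI : Fin N → ℕ) (ε : ℝ) (C0 C1 : CMat dO dI N) : EReal :=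
  sInf { x : EReal | ∃ C : CMat dO dI N, IsQuantumComb dO dI C ∧
    traceNorm (C - C0) ≤ 2 * ε ∧ x = Dmax C C1 }

/-- Revised smooth max-relative entropy of quantum combs:
`D̃_max^ε(C₀‖C₁) = max_Γ min { D_max(C‖√Γ C₁ √Γ) | C ≥ 0, Tr C = 1,
½‖√Γ C₀ √Γ - C‖₁ ≤ ε }`, the max over dual combs `Γ`. -/
def DmaxTilde {N : ℕ} (dO dI : Fin N → ℕ) (ε : ℝ) (C0 C1 : CMat dO dI N) : EReal :=
  sSup { x : EReal | ∃ Γ : CMat dO dI N, IsDualComb dO dI Γ ∧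
    x = sInf { y : EReal | ∃ C : CMat dO dI N, C.PosSemidef ∧ C.trace = 1 ∧
      traceNorm (msqrt Γ * C0 * msqrt Γ - C) ≤ 2 * ε ∧
      y = Dmax C (msqrt Γ * C1 * msqrt Γ) } }

/-- Hypothesis-testing quantity
`β_δ(C₀‖C₁) = min { Tr[Π √Γ C₁ √Γ] | 0 ≤ Π ≤ I, Γ dual comb, Tr[(I-Π) √Γ C₀ √Γ] ≤ δ }`. -/
def betaHT {N : ℕ} (dO dI : Fin N → ℕ) (δ : ℝ) (C0 C1 : CMat dO dI N) : ℝ :=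
  sInf { b : ℝ | ∃ P Γ : CMat dO dI N, P.PosSemidef ∧ ((1 : CMat dO dI N) - P).PosSemidef ∧
    IsDualComb dO dI Γ ∧
    (((1 - P) * (msqrt Γ * C0 * msqrt Γ)).trace).re ≤ δ ∧
    b = ((P * (msqrt Γ * C1 * msqrt Γ)).trace).re }

/-- Maximum score `w_max(Ω) = max { Tr(Ω C) | C a quantum comb }`. -/
def wmax {N : ℕ} (dO dI : Fin N → ℕ) (Ω : CMat dO dI N) : ℝ :=
  sSup { w : ℝ | ∃ C : CMat dO dI N, IsQuantumComb dO dI C ∧ w = ((Ω * C).trace).re }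

/-- Smooth maximum score `w_max^ε(Ω) = sup { w_max(Ω') | Ω' ≥ 0, Tr Ω' = Tr Ω,
½‖Ω - Ω'‖₁ ≤ ε }`. -/
def wmaxSmooth {N : ℕ} (dO dI : Fin N → ℕ) (ε : ℝ) (Ω : CMat dO dI N) : ℝ :=
  sSup { w : ℝ | ∃ Ω' : CMat dO dI N, Ω'.PosSemidef ∧ traceNorm (Ω - Ω') ≤ 2 * ε ∧
    Ω'.trace = Ω.trace ∧ w = wmax dO dI Ω' }

/-- Dimension function of the `n`-fold concatenated network. -/
def repDim {N : ℕ} (n : ℕ) (d : Fin N → ℕ) : Fin (n * N) → ℕ :=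
  fun j => d ⟨j.val % N, Nat.mod_lt _ (Nat.pos_of_ne_zero fun h =>
    Nat.not_lt_zero j.val (by simpa [h] using j.isLt))⟩

/-- Extract the `i`-th copy of an index of the `n`-fold concatenated network. -/
def sliceIdx {N : ℕ} (n : ℕ) (d : Fin N → ℕ) (i : Fin n) (x : CutIdx (repDim n d) (n * N)) :
    CutIdx d N := fun j =>
  Fin.cast (by
    have hj := j.isLt
    have h1 : (i.val + 1) * N ≤ n * N := Nat.mul_le_mul_right N i.isLt
    have h2 : (i.val + 1) * N = i.val * N + N := Nat.succ_mul _ _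
    have hb : i.val * N + j.val < n * N := by omega
    have hm : (i.val * N + j.val) % N = j.val := by
      rw [Nat.add_comm, Nat.add_mul_mod_self_right]; exact Nat.mod_eq_of_lt hj
    show cut (repDim n d) (n * N) ⟨i.val * N + j.val, hb⟩ = cut d N j
    simp only [cut, repDim, if_pos hb, if_pos hj]
    exact congrArg d (Fin.ext hm))
    (x ⟨i.val * N + j.val, by
      have hj := j.isLt
      have h1 : (i.val + 1) * N ≤ n * N := Nat.mul_le_mul_right N i.isLt
      have h2 : (i.val + 1) * N = i.val * N + N := Nat.succ_mul _ _
      omega⟩)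

/-- The `n`-fold tensor power `Ω^{⊗n}` on the `n`-fold concatenated network. -/
def tpow {N : ℕ} (dO dI : Fin N → ℕ) (n : ℕ) (Ω : CMat dO dI N) :
    CMat (repDim n dO) (repDim n dI) (n * N) :=
  fun p q => ∏ i : Fin n,
    Ω (sliceIdx n dO i p.1, sliceIdx n dI i p.2) (sliceIdx n dO i q.1, sliceIdx n dI i q.2)

/-- Extract the left part of an index of the concatenation of two networks. -/
def appendIdxL {N M : ℕ} (d : Fin N → ℕ) (e : Fin M → ℕ)
    (x : CutIdx (Fin.append d e) (N + M)) : CutIdx d N := fun j =>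
  Fin.cast (by
    show cut (Fin.append d e) (N + M) (Fin.castAdd M j) = cut d N j
    simp only [cut, if_pos (Fin.castAdd M j).isLt, if_pos j.isLt]
    exact Fin.append_left d e j) (x (Fin.castAdd M j))

/-- Extract the right part of an index of the concatenation of two networks. -/
def appendIdxR {N M : ℕ} (d : Fin N → ℕ) (e : Fin M → ℕ)
    (x : CutIdx (Fin.append d e) (N + M)) : CutIdx e M := fun j =>
  Fin.cast (by
    show cut (Fin.append d e) (N + M) (Fin.natAdd N j) = cut e M j
    simp only [cut, if_pos (Fin.natAdd N j).isLt, if_pos j.isLt]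
    exact Fin.append_right d e j) (x (Fin.natAdd N j))

/-- The tensor product `C ⊗ C'` of operators on two networks, as an operator on the
concatenated network with `N + M` steps. -/
def tens2 {N M : ℕ} {dO dI : Fin N → ℕ} {eO eI : Fin M → ℕ}
    (C : CMat dO dI N) (C' : CMat eO eI M) :
    CMat (Fin.append dO eO) (Fin.append dI eI) (N + M) :=
  fun p q =>
    C (appendIdxL dO eO p.1, appendIdxL dI eI p.2) (appendIdxL dO eO q.1, appendIdxL dI eI q.2) *
    C' (appendIdxR dO eO p.1, appendIdxR dI eI p.2) (appendIdxR dO eO q.1, appendIdxR dI eI q.2)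


section Aux19

variable {ι : Type} [Fintype ι] [DecidableEq ι] {A : Matrix ι ι ℂ}

lemma orr : (RCLike.ofReal : ℝ → ℂ) = Complex.ofReal := rfl

lemma cfc_mul (hA : A.IsHermitian) (f g : ℝ → ℝ) :
    hA.cfc f * hA.cfc g = hA.cfc (fun x => f x * g x) := by
  unfold Matrix.IsHermitian.cfc
  simp only [Unitary.conjStarAlgAut_apply]
  simp only [orr]
  have h1 : (star (hA.eigenvectorUnitary : Matrix ι ι ℂ)) *
      (hA.eigenvectorUnitary : Matrix ι ι ℂ) = 1 :=
    Unitary.star_mul_self_of_mem (SetLike.coe_mem _)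
  have rearr : ∀ {a b c d e f : Matrix ι ι ℂ},
      (a * b * c) * (d * e * f) = a * (b * (c * d) * e) * f := by
    intros; simp only [mul_assoc]
  rw [rearr, h1, mul_one, diagonal_mul_diagonal]
  have : (fun i => (Complex.ofReal ∘ f ∘ hA.eigenvalues) i *
      (Complex.ofReal ∘ g ∘ hA.eigenvalues) i)
      = Complex.ofReal ∘ (fun x => f x * g x) ∘ hA.eigenvalues := by
    funext i; simp [Function.comp]
  rw [this]

lemma cfc_sub (hA : A.IsHermitian) (f g : ℝ → ℝ) :
    hA.cfc f - hA.cfc g = hA.cfc (fun x => f x - g x) := by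
  unfold Matrix.IsHermitian.cfc
  simp only [Unitary.conjStarAlgAut_apply]
  simp only [orr]
  rw [← sub_mul, ← mul_sub, diagonal_sub]
  have : (fun i => (Complex.ofReal ∘ f ∘ hA.eigenvalues) i - (Complex.ofReal ∘ g ∘ hA.eigenvalues) i)
      = Complex.ofReal ∘ (fun x => f x - g x) ∘ hA.eigenvalues := by
    funext i; simp [Function.comp]
  rw [this]

lemma cfc_add (hA : A.IsHermitian) (f g : ℝ → ℝ) :
    hA.cfc f + hA.cfc g = hA.cfc (fun x => f x + g x) := by
  unfold Matrix.IsHermitian.cfc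
  simp only [Unitary.conjStarAlgAut_apply]
  simp only [orr]
  rw [← add_mul, ← mul_add, diagonal_add]
  have : (fun i => (Complex.ofReal ∘ f ∘ hA.eigenvalues) i + (Complex.ofReal ∘ g ∘ hA.eigenvalues) i)
      = Complex.ofReal ∘ (fun x => f x + g x) ∘ hA.eigenvalues := by
    funext i; simp [Function.comp]
  rw [this]

lemma cfc_id' (hA : A.IsHermitian) : hA.cfc (fun x => x) = A := by
  unfold Matrix.IsHermitian.cfc
  exact (hA.spectral_theorem).symm

lemma cfc_one' (hA : A.IsHermitian) : hA.cfc (fun _ => 1) = 1 := by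
  unfold Matrix.IsHermitian.cfc
  simp only [Unitary.conjStarAlgAut_apply]
  simp only [orr]
  have h1 : (hA.eigenvectorUnitary : Matrix ι ι ℂ) *
      (star (hA.eigenvectorUnitary : Matrix ι ι ℂ)) = 1 :=
    Unitary.mul_star_self_of_mem (SetLike.coe_mem _)
  have : Complex.ofReal ∘ (fun _ : ℝ => (1:ℝ)) ∘ hA.eigenvalues = fun _ => (1:ℂ) := by
    funext i; simp [Function.comp]
  rw [this, diagonal_one, mul_one, h1]

lemma cfc_congr' (hA : A.IsHermitian) {f g : ℝ → ℝ}
    (h : ∀ i, f (hA.eigenvalues i) = g (hA.eigenvalues i)) : hA.cfc f = hA.cfc g := by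
  unfold Matrix.IsHermitian.cfc
  simp only [orr]
  have : Complex.ofReal ∘ f ∘ hA.eigenvalues = Complex.ofReal ∘ g ∘ hA.eigenvalues := by
    funext i; simp [Function.comp, h i]
  rw [this]

lemma cfc_posSemidef (hA : A.IsHermitian) {f : ℝ → ℝ}
    (hf : ∀ i, 0 ≤ f (hA.eigenvalues i)) : (hA.cfc f).PosSemidef := by
  unfold Matrix.IsHermitian.cfc
  simp only [Unitary.conjStarAlgAut_apply]
  rw [Matrix.star_eq_conjTranspose]
  exact (Matrix.PosSemidef.diagonal (fun i => by
    exact Complex.zero_le_real.mpr (hf i))).mul_mul_conjTranspose_same _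

lemma cfc_isHermitian (hA : A.IsHermitian) (f : ℝ → ℝ) : (hA.cfc f).IsHermitian := by
  unfold Matrix.IsHermitian.cfc
  simp only [Unitary.conjStarAlgAut_apply]
  rw [Matrix.star_eq_conjTranspose]
  exact Matrix.isHermitian_mul_mul_conjTranspose _ (by
    apply Matrix.isHermitian_diagonal_of_self_adjoint
    funext i
    simp [Function.comp, Pi.star_apply, RCLike.star_def, RCLike.conj_ofReal])

lemma cfc_trace (hA : A.IsHermitian) (f : ℝ → ℝ) :
    (hA.cfc f).trace = ∑ i, (f (hA.eigenvalues i) : ℂ) := by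
  unfold Matrix.IsHermitian.cfc
  simp only [Unitary.conjStarAlgAut_apply]
  rw [Matrix.trace_mul_cycle]
  have h1 : (star (hA.eigenvectorUnitary : Matrix ι ι ℂ)) *
      (hA.eigenvectorUnitary : Matrix ι ι ℂ) = 1 :=
    Unitary.star_mul_self_of_mem (SetLike.coe_mem _)
  rw [h1, one_mul, Matrix.trace_diagonal]
  rfl

lemma psd_trace_nonneg (hM : A.PosSemidef) : 0 ≤ A.trace := by
  rw [Matrix.trace]
  apply Finset.sum_nonneg
  intro i _
  simpa [dotProduct, Pi.single_apply, apply_ite] using hM.dotProduct_mulVec_nonneg (Pi.single i 1)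

open scoped MatrixOrder in
lemma trace_mul_psd_nonneg {M N : Matrix ι ι ℂ} (hM : M.PosSemidef) (hN : N.PosSemidef) :
    0 ≤ (M * N).trace := by
  obtain ⟨B, rfl⟩ : ∃ B : Matrix ι ι ℂ, N = Bᴴ * B := by
    obtain ⟨X, hX, -, hXX⟩ := CFC.exists_sqrt_of_isSelfAdjoint_of_quasispectrumRestricts
      hN.isHermitian (QuasispectrumRestricts.nnreal_of_nonneg (Matrix.nonneg_iff_posSemidef.mpr hN))
    exact ⟨X, by rw [← hXX, ← Matrix.star_eq_conjTranspose, hX.star_eq]⟩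
  have : M * (Bᴴ * B) = (M * Bᴴ) * B := by rw [mul_assoc]
  rw [this, Matrix.trace_mul_comm, ← mul_assoc]
  exact psd_trace_nonneg (hM.mul_mul_conjTranspose_same B)

lemma psd_trace_re_nonneg (hM : A.PosSemidef) : 0 ≤ A.trace.re :=
  (Complex.nonneg_iff.mp (psd_trace_nonneg hM)).1

lemma cfc_zero' (hA : A.IsHermitian) : hA.cfc (fun _ => 0) = 0 := by
  unfold Matrix.IsHermitian.cfc
  simp only [Unitary.conjStarAlgAut_apply]
  simp only [orr]
  have : Complex.ofReal ∘ (fun _ : ℝ => (0:ℝ)) ∘ hA.eigenvalues = fun _ => (0:ℂ) := by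
    funext i; simp [Function.comp]
  rw [this, diagonal_zero, mul_zero, zero_mul]

lemma cfc_realsmul (hA : A.IsHermitian) (c : ℝ) (f : ℝ → ℝ) :
    (c:ℂ) • hA.cfc f = hA.cfc (fun x => c * f x) := by
  unfold Matrix.IsHermitian.cfc
  simp only [Unitary.conjStarAlgAut_apply]
  simp only [orr]
  rw [show (c:ℂ) • (↑hA.eigenvectorUnitary * diagonal (Complex.ofReal ∘ f ∘ hA.eigenvalues) *
      star ↑hA.eigenvectorUnitary) = ↑hA.eigenvectorUnitary *
      ((c:ℂ) • diagonal (Complex.ofReal ∘ f ∘ hA.eigenvalues)) * star ↑hA.eigenvectorUnitary by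
    rw [mul_smul_comm, smul_mul_assoc]]
  congr 1
  congr 1
  ext i j
  by_cases h : i = j <;> simp [diagonal_apply, h, Complex.ofReal_mul]


lemma posPartMat_eq (hH : A.IsHermitian) : posPartMat A = hH.cfc (fun x => max x 0) :=
  dif_pos hH

lemma posPart_psd (hH : A.IsHermitian) : (posPartMat A).PosSemidef := by
  rw [posPartMat_eq hH]
  exact cfc_posSemidef hH (fun i => le_max_right _ _)

lemma posPart_sub_psd (hH : A.IsHermitian) : (posPartMat A - A).PosSemidef := by
  have h := cfc_sub hH (fun x => max x 0) (fun x => x)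
  rw [cfc_id' hH] at h
  rw [posPartMat_eq hH, h]
  exact cfc_posSemidef hH (fun i => by simp [le_max_left, sub_nonneg])

lemma proj_psd (hH : A.IsHermitian) :
    (hH.cfc (fun x => if 0 < x then 1 else 0)).PosSemidef :=
  cfc_posSemidef hH (fun i => by split <;> norm_num)

lemma one_sub_proj_psd (hH : A.IsHermitian) :
    ((1 : Matrix ι ι ℂ) - hH.cfc (fun x => if 0 < x then 1 else 0)).PosSemidef := by
  have h := cfc_sub hH (fun _ => 1) (fun x => if 0 < x then 1 else 0)
  rw [cfc_one' hH] at h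
  rw [h]
  exact cfc_posSemidef hH (fun i => by split <;> norm_num)

lemma proj_mul (hH : A.IsHermitian) :
    hH.cfc (fun x => if 0 < x then 1 else 0) * A = posPartMat A := by
  have h := cfc_mul hH (fun x => if 0 < x then 1 else 0) (fun x => x)
  rw [cfc_id' hH] at h
  rw [h, posPartMat_eq hH]
  apply cfc_congr' hH
  intro i
  rcases lt_or_ge 0 (hH.eigenvalues i) with hx | hx
  · simp [hx, max_eq_left hx.le]
  · simp [not_lt.mpr hx, max_eq_right hx]

lemma trace_mul_le_posPart (hH : A.IsHermitian) {Q : Matrix ι ι ℂ} (hQ : Q.PosSemidef)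
    (hQ1 : ((1 : Matrix ι ι ℂ) - Q).PosSemidef) :
    ((Q * A).trace).re ≤ ((posPartMat A).trace).re := by
  have h1 : 0 ≤ (((1 - Q) * posPartMat A).trace) :=
    trace_mul_psd_nonneg hQ1 (posPart_psd hH)
  have h2 : 0 ≤ ((Q * (posPartMat A - A)).trace) :=
    trace_mul_psd_nonneg hQ (posPart_sub_psd hH)
  have e : ((1 - Q) * posPartMat A).trace + (Q * (posPartMat A - A)).trace
      = (posPartMat A).trace - (Q * A).trace := by
    rw [Matrix.sub_mul, Matrix.mul_sub, Matrix.one_mul, Matrix.trace_sub, Matrix.trace_sub]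
    ring
  have h3 := add_nonneg h1 h2
  rw [e] at h3
  have h4 := (Complex.nonneg_iff.mp h3).1
  rw [Complex.sub_re] at h4
  linarith

lemma psd_trace_eq_zero (hM : A.PosSemidef) (h : A.trace.re = 0) : A = 0 := by
  have htr : A.trace = ∑ i, (hM.1.eigenvalues i : ℂ) := by
    conv_lhs => rw [← cfc_id' hM.1]
    exact cfc_trace hM.1 _
  have hre : ∑ i, hM.1.eigenvalues i = 0 := by
    have := congrArg Complex.re htr
    rw [h] at this
    simpa using this.symm
  have hz : ∀ i, hM.1.eigenvalues i = 0 := by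
    intro i
    exact (Finset.sum_eq_zero_iff_of_nonneg
      (fun j _ => hM.eigenvalues_nonneg j)).mp hre i (Finset.mem_univ i)
  calc A = hM.1.cfc (fun x => x) := (cfc_id' hM.1).symm
    _ = hM.1.cfc (fun _ => 0) := cfc_congr' hM.1 (fun i => hz i)
    _ = 0 := cfc_zero' hM.1

lemma mul_eq_zero_of_mulVec (M N : Matrix ι ι ℂ) (h : ∀ v, M *ᵥ (N *ᵥ v) = 0) :
    M * N = 0 := by
  ext i j
  have h2 := congrFun (h (Pi.single j 1)) i
  rw [Matrix.mulVec_mulVec] at h2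
  simpa [Matrix.mulVec_single] using h2

lemma exists_feasible {ρ σ : Matrix ι ι ℂ} (hρ : ρ.PosSemidef) (hρ1 : ρ.trace = 1)
    (hσ : σ.PosSemidef) (hσ1 : σ.trace = 1)
    (hker : ∀ x, σ *ᵥ x = 0 → ρ *ᵥ x = 0) :
    ∃ c : ℝ, 0 ≤ c ∧ ((c : ℂ) • σ - ρ).PosSemidef := by
  classical
  have hnn : ∀ i, 0 ≤ hσ.1.eigenvalues i := hσ.eigenvalues_nonneg
  set T : Finset ι := Finset.univ.filter (fun i => 0 < hσ.1.eigenvalues i) with hT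
  have htrσ : σ.trace = ∑ i, (hσ.1.eigenvalues i : ℂ) := by
    conv_lhs => rw [← cfc_id' hσ.1]
    exact cfc_trace hσ.1 _
  have hTne : T.Nonempty := by
    by_contra hc
    rw [Finset.not_nonempty_iff_eq_empty] at hc
    have hz : ∀ i, hσ.1.eigenvalues i = 0 := by
      intro i
      by_contra hne
      have h1 : 0 < hσ.1.eigenvalues i := lt_of_le_of_ne (hnn i) (Ne.symm hne)
      have h2 : i ∈ T := Finset.mem_filter.mpr ⟨Finset.mem_univ i, h1⟩
      simp [hc] at h2
    rw [hσ1] at htrσ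
    simp [hz] at htrσ
  set c0 : ℝ := T.inf' hTne hσ.1.eigenvalues with hc0
  have hc0pos : 0 < c0 := by
    rw [hc0, Finset.lt_inf'_iff]
    intro i hi
    exact (Finset.mem_filter.mp hi).2
  have hc0le : ∀ i, 0 < hσ.1.eigenvalues i → c0 ≤ hσ.1.eigenvalues i := fun i hi =>
    Finset.inf'_le _ (Finset.mem_filter.mpr ⟨Finset.mem_univ i, hi⟩)
  refine ⟨1 / c0, by positivity, ?_⟩
  set P := hσ.1.cfc (fun x => if 0 < x then 1 else 0) with hP
  set Q := hσ.1.cfc (fun x => if 0 < x then (0:ℝ) else 1) with hQ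
  have hσQ : σ * Q = 0 := by
    have hm := cfc_mul hσ.1 (fun x => x) (fun x => if 0 < x then (0:ℝ) else 1)
    rw [cfc_id' hσ.1] at hm
    rw [hQ, hm]
    have h2 : hσ.1.cfc (fun x => x * if 0 < x then (0:ℝ) else 1) = hσ.1.cfc (fun _ => 0) := by
      apply cfc_congr' hσ.1
      intro i
      rcases lt_or_ge 0 (hσ.1.eigenvalues i) with hx | hx
      · simp [hx]
      · have h3 : hσ.1.eigenvalues i = 0 := le_antisymm hx (hnn i)
        simp [h3]
    rw [h2, cfc_zero' hσ.1]
  have hρQ : ρ * Q = 0 := by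
    apply mul_eq_zero_of_mulVec
    intro v
    apply hker
    rw [Matrix.mulVec_mulVec, hσQ, Matrix.zero_mulVec]
  have hPQ : P + Q = 1 := by
    rw [hP, hQ, cfc_add hσ.1]
    have h2 : hσ.1.cfc (fun x => (if 0 < x then (1:ℝ) else 0) + if 0 < x then (0:ℝ) else 1)
        = hσ.1.cfc (fun _ => 1) := by
      apply cfc_congr' hσ.1
      intro i
      by_cases hx : 0 < hσ.1.eigenvalues i <;> simp [hx]
    rw [h2, cfc_one' hσ.1]
  have hρP : ρ * P = ρ := by
    have h2 : P = 1 - Q := eq_sub_of_add_eq hPQ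
    rw [h2, Matrix.mul_sub, Matrix.mul_one, hρQ, sub_zero]
  have hPherm : P.IsHermitian := (proj_psd hσ.1).1
  have hPρ : P * ρ = ρ := by
    have h1 := congrArg Matrix.conjTranspose hρP
    rwa [Matrix.conjTranspose_mul, hρ.1, hPherm] at h1
  have hPP : P * P = P := by
    rw [hP, cfc_mul hσ.1]
    apply cfc_congr' hσ.1
    intro i
    by_cases hx : 0 < hσ.1.eigenvalues i <;> simp [hx]
  have claim1 : (((1 / c0 : ℝ) : ℂ) • σ - P).PosSemidef := by
    have hsm := cfc_realsmul hσ.1 (1 / c0) (fun x => x)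
    rw [cfc_id' hσ.1] at hsm
    rw [hP, hsm, cfc_sub hσ.1]
    apply cfc_posSemidef hσ.1
    intro i
    rcases lt_or_ge 0 (hσ.1.eigenvalues i) with hx | hx
    · have h4 := hc0le i hx
      rw [if_pos hx]
      rw [div_mul_eq_mul_div, one_mul, sub_nonneg, le_div_iff₀ hc0pos, one_mul]
      linarith
    · have h3 : hσ.1.eigenvalues i = 0 := le_antisymm hx (hnn i)
      rw [if_neg (not_lt.mpr hx), h3]
      norm_num
  have hone_sub_rho : ((1 : Matrix ι ι ℂ) - ρ).PosSemidef := by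
    have h2 := cfc_sub hρ.1 (fun _ => 1) (fun x => x)
    rw [cfc_one' hρ.1, cfc_id' hρ.1] at h2
    rw [h2]
    apply cfc_posSemidef hρ.1
    intro i
    rw [sub_nonneg]
    have htrρ : ρ.trace = ∑ j, (hρ.1.eigenvalues j : ℂ) := by
      conv_lhs => rw [← cfc_id' hρ.1]
      exact cfc_trace hρ.1 _
    have hsum : ∑ j, hρ.1.eigenvalues j = 1 := by
      have := htrρ.symm.trans hρ1
      have h5 := congrArg Complex.re this
      simpa using h5
    calc hρ.1.eigenvalues i ≤ ∑ j, hρ.1.eigenvalues j :=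
          Finset.single_le_sum (fun j _ => hρ.eigenvalues_nonneg j) (Finset.mem_univ i)
      _ = 1 := hsum
  have claim2 : (P - ρ).PosSemidef := by
    have h2 : P - ρ = Pᴴ * ((1 : Matrix ι ι ℂ) - ρ) * P := by
      rw [hPherm, Matrix.mul_sub, Matrix.mul_one, Matrix.sub_mul, hPP, mul_assoc, hρP, hPρ]
    rw [h2]
    exact hone_sub_rho.conjTranspose_mul_mul_same P
  have : ((1 / c0 : ℝ) : ℂ) • σ - ρ = (((1 / c0 : ℝ) : ℂ) • σ - P) + (P - ρ) := (sub_add_sub_cancel _ _ _).symm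
  rw [this]
  exact claim1.add claim2

lemma herm_sub_smul {ρ σ : Matrix ι ι ℂ} (hρ : ρ.IsHermitian) (hσ : σ.IsHermitian) (l : ℝ) :
    (ρ - (l : ℂ) • σ).IsHermitian := by
  apply hρ.sub
  rw [Matrix.IsHermitian, Matrix.conjTranspose_smul, hσ]
  congr 1
  simp [Complex.star_def, Complex.conj_ofReal]

lemma herm_smul_sub {ρ σ : Matrix ι ι ℂ} (hρ : ρ.IsHermitian) (hσ : σ.IsHermitian) (l : ℝ) :
    ((l : ℂ) • σ - ρ).IsHermitian := by
  apply Matrix.IsHermitian.sub _ hρ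
  rw [Matrix.IsHermitian, Matrix.conjTranspose_smul, hσ]
  congr 1
  simp [Complex.star_def, Complex.conj_ofReal]

lemma nonneg_eq_re (z : ℂ) (h : 0 ≤ z) : z = (z.re : ℂ) := by
  obtain ⟨h1, h2⟩ := Complex.nonneg_iff.mp h
  exact Complex.ext rfl (by simpa using h2.symm)

end Aux19

/-- For density operators `ρ, σ` with `supp ρ ⊆ supp σ`, the function
`t(λ) = Tr[(ρ - λσ)₊]` is continuous and strictly decreasing on `[0, 2^{D_max(ρ‖σ)}]`,
with `t(0) = 1`, `t(2^{D_max(ρ‖σ)}) = 0`, and range `[0,1]` on this interval. -/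
theorem trace_posPart_continuous_strictAnti {ι : Type} [Fintype ι] [DecidableEq ι]
    (ρ σ : Matrix ι ι ℂ)
    (hρ : ρ.PosSemidef) (hρ1 : ρ.trace = 1) (hσ : σ.PosSemidef) (hσ1 : σ.trace = 1)
    (hsupp : suppSubset ρ σ) :
    ContinuousOn (fun lam : ℝ => ((posPartMat (ρ - (lam : ℂ) • σ)).trace).re)
        (Set.Icc 0 ((2 : ℝ) ^ (Dmax ρ σ).toReal)) ∧
      StrictAntiOn (fun lam : ℝ => ((posPartMat (ρ - (lam : ℂ) • σ)).trace).re)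
        (Set.Icc 0 ((2 : ℝ) ^ (Dmax ρ σ).toReal)) ∧
      ((posPartMat (ρ - ((0 : ℝ) : ℂ) • σ)).trace).re = 1 ∧
      ((posPartMat (ρ - ((((2 : ℝ) ^ (Dmax ρ σ).toReal) : ℝ) : ℂ) • σ)).trace).re = 0 ∧
      (fun lam : ℝ => ((posPartMat (ρ - (lam : ℂ) • σ)).trace).re) ''
          (Set.Icc 0 ((2 : ℝ) ^ (Dmax ρ σ).toReal)) = Set.Icc 0 1 := by
  classical
  -- kernel inclusion
  have hker : ∀ x, σ *ᵥ x = 0 → ρ *ᵥ x = 0 := by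
    intro x hx
    have hmem : Matrix.toLin' ρ x ∈ LinearMap.range (Matrix.toLin' σ) :=
      hsupp (LinearMap.mem_range_self _ x)
    obtain ⟨y, hy⟩ := hmem
    rw [Matrix.toLin'_apply] at hy
    have hdot : star x ⬝ᵥ ρ *ᵥ x = 0 := by
      rw [Matrix.toLin'_apply] at hy
      rw [← hy, Matrix.dotProduct_mulVec]
      have hvm : star x ᵥ* σ = 0 := by
        have h1 := Matrix.star_mulVec (M := σᴴ) (v := x)
        rw [Matrix.conjTranspose_conjTranspose, hσ.1, hx] at h1
        simpa using h1.symm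
      rw [hvm, zero_dotProduct]
    exact (hρ.dotProduct_mulVec_zero_iff x).mp hdot
  obtain ⟨c, hcnn, hcpsd⟩ := exists_feasible hρ hρ1 hσ hσ1 hker
  have hSne : (DmaxSet ρ σ).Nonempty := ⟨c, hcnn, hcpsd⟩
  set lmax := sInf (DmaxSet ρ σ) with hlmaxdef
  have hlmax_nonneg : 0 ≤ lmax := le_csInf hSne (fun l hl => hl.1)
  have hSbdd : BddBelow (DmaxSet ρ σ) := ⟨0, fun l hl => hl.1⟩
  -- sInf belongs to the set
  have hmem : lmax ∈ DmaxSet ρ σ := by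
    refine ⟨hlmax_nonneg,
      Matrix.PosSemidef.of_dotProduct_mulVec_nonneg (herm_smul_sub hρ.1 hσ.1 lmax) ?_⟩
    intro x
    have hσx := hσ.dotProduct_mulVec_nonneg x
    have hρx := hρ.dotProduct_mulVec_nonneg x
    set a : ℝ := (star x ⬝ᵥ σ *ᵥ x).re with ha
    set b : ℝ := (star x ⬝ᵥ ρ *ᵥ x).re with hb
    have hσxa : star x ⬝ᵥ σ *ᵥ x = (a : ℂ) := nonneg_eq_re _ hσx
    have hρxb : star x ⬝ᵥ ρ *ᵥ x = (b : ℂ) := nonneg_eq_re _ hρx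
    have hanneg : 0 ≤ a := (Complex.nonneg_iff.mp hσx).1
    have hexp : ∀ l : ℝ, star x ⬝ᵥ ((l : ℂ) • σ - ρ) *ᵥ x = ((l * a - b : ℝ) : ℂ) := by
      intro l
      rw [Matrix.sub_mulVec, Matrix.smul_mulVec, dotProduct_sub, dotProduct_smul,
        hσxa, hρxb, smul_eq_mul]
      push_cast
      ring
    have hS : ∀ l ∈ DmaxSet ρ σ, b ≤ l * a := by
      intro l hl
      have := hl.2.dotProduct_mulVec_nonneg x
      rw [hexp l] at this
      have := Complex.zero_le_real.mp this
      linarith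
    have hgoal : b ≤ lmax * a := by
      rcases eq_or_lt_of_le hanneg with haz | hapos
      · have := hS c ⟨hcnn, hcpsd⟩
        rw [← haz] at this ⊢
        simpa using this
      · have hdiv : ∀ l ∈ DmaxSet ρ σ, b / a ≤ l := fun l hl =>
          (div_le_iff₀ hapos).mpr (by linarith [hS l hl])
        have hba := le_csInf hSne hdiv
        calc b = (b / a) * a := by field_simp
          _ ≤ lmax * a := mul_le_mul_of_nonneg_right hba hanneg
    rw [hexp lmax]
    exact Complex.zero_le_real.mpr (by linarith)
  have hlmax_pos : 0 < lmax := by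
    rcases eq_or_lt_of_le hlmax_nonneg with h0 | h; swap
    · exact h
    exfalso
    have hpsd := hmem.2
    rw [← h0] at hpsd
    have h2 : ((0 : ℝ) : ℂ) • σ - ρ = -ρ := by norm_num
    rw [h2] at hpsd
    have h3 := psd_trace_re_nonneg hpsd
    rw [Matrix.trace_neg, Complex.neg_re, hρ1] at h3
    simp only [Complex.one_re] at h3
    linarith
  have hpow : (2 : ℝ) ^ (Dmax ρ σ).toReal = lmax := by
    have hd : Dmax ρ σ = ((Real.logb 2 lmax : ℝ) : EReal) := by
      rw [Dmax, if_pos hSne]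
    rw [hd, EReal.toReal_coe]
    exact Real.rpow_logb (by norm_num) (by norm_num) hlmax_pos
  rw [hpow]
  -- abbreviations
  have hherm : ∀ lam : ℝ, (ρ - (lam : ℂ) • σ).IsHermitian := fun lam =>
    herm_sub_smul hρ.1 hσ.1 lam
  set t : ℝ → ℝ := fun lam => ((posPartMat (ρ - (lam : ℂ) • σ)).trace).re with htdef
  set Pr : ℝ → Matrix ι ι ℂ := fun lam => (hherm lam).cfc (fun x => if 0 < x then 1 else 0)
    with hPrdef
  have hPr_psd : ∀ lam, (Pr lam).PosSemidef := fun lam => proj_psd (hherm lam)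
  have hPr1_psd : ∀ lam, ((1 : Matrix ι ι ℂ) - Pr lam).PosSemidef := fun lam =>
    one_sub_proj_psd (hherm lam)
  have heq : ∀ lam, t lam = ((Pr lam * (ρ - (lam : ℂ) • σ)).trace).re := by
    intro lam
    rw [htdef, hPrdef]
    simp only
    rw [proj_mul (hherm lam)]
  have hub : ∀ (lam : ℝ) (Q : Matrix ι ι ℂ), Q.PosSemidef →
      ((1 : Matrix ι ι ℂ) - Q).PosSemidef →
      ((Q * (ρ - (lam : ℂ) • σ)).trace).re ≤ t lam := fun lam Q hQ hQ1 =>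
    trace_mul_le_posPart (hherm lam) hQ hQ1
  have htnonneg : ∀ lam, 0 ≤ t lam := fun lam =>
    psd_trace_re_nonneg (posPart_psd (hherm lam))
  -- trace expansion
  have htr : ∀ (mu : ℝ) (Q : Matrix ι ι ℂ), Q.PosSemidef →
      ((Q * (ρ - (mu : ℂ) • σ)).trace).re
        = ((Q * ρ).trace).re - mu * ((Q * σ).trace).re := by
    intro mu Q hQ
    have h1 : Q * (ρ - (mu : ℂ) • σ) = Q * ρ - (mu : ℂ) • (Q * σ) := by
      rw [Matrix.mul_sub, Matrix.mul_smul]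
    rw [h1, Matrix.trace_sub, Matrix.trace_smul]
    have h2 : (Q * σ).trace = (((Q * σ).trace).re : ℂ) :=
      nonneg_eq_re _ (trace_mul_psd_nonneg hQ hσ)
    rw [Complex.sub_re, smul_eq_mul]
    congr 1
    rw [h2]
    rw [← Complex.ofReal_mul]
    simp
  have hQσ_nonneg : ∀ (Q : Matrix ι ι ℂ), Q.PosSemidef → 0 ≤ ((Q * σ).trace).re :=
    fun Q hQ => (Complex.nonneg_iff.mp (trace_mul_psd_nonneg hQ hσ)).1
  have hQσ_le_one : ∀ (Q : Matrix ι ι ℂ), Q.PosSemidef →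
      ((1 : Matrix ι ι ℂ) - Q).PosSemidef → ((Q * σ).trace).re ≤ 1 := by
    intro Q hQ hQ1
    have h1 := (Complex.nonneg_iff.mp (trace_mul_psd_nonneg hQ1 hσ)).1
    have h2 : ((1 : Matrix ι ι ℂ) - Q) * σ = σ - Q * σ := by
      rw [Matrix.sub_mul, Matrix.one_mul]
    rw [h2, Matrix.trace_sub, Complex.sub_re, hσ1] at h1
    simp only [Complex.one_re] at h1
    linarith
  -- positivity below lmax
  have htpos : ∀ lam : ℝ, 0 ≤ lam → lam < lmax → 0 < t lam := by
    intro lam h0 hlt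
    rcases (htnonneg lam).lt_or_eq with h | h
    · exact h
    exfalso
    have hzero : posPartMat (ρ - (lam : ℂ) • σ) = 0 :=
      psd_trace_eq_zero (posPart_psd (hherm lam)) h.symm
    have hpsd : ((lam : ℂ) • σ - ρ).PosSemidef := by
      have := posPart_sub_psd (hherm lam)
      rw [hzero, zero_sub, neg_sub] at this
      exact this
    have : lmax ≤ lam := csInf_le hSbdd ⟨h0, hpsd⟩
    linarith
  -- Lipschitz bound
  have hlip : ∀ a b : ℝ, t a - t b ≤ |a - b| := by
    intro a b
    have h1 : t a = ((Pr a * ρ).trace).re - a * ((Pr a * σ).trace).re := by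
      rw [heq a, htr a _ (hPr_psd a)]
    have h2 : ((Pr a * ρ).trace).re - b * ((Pr a * σ).trace).re ≤ t b := by
      rw [← htr b _ (hPr_psd a)]
      exact hub b _ (hPr_psd a) (hPr1_psd a)
    have hs0 := hQσ_nonneg _ (hPr_psd a)
    have hs1 := hQσ_le_one _ (hPr_psd a) (hPr1_psd a)
    set s := ((Pr a * σ).trace).re
    have : t a - t b ≤ (b - a) * s := by linarith
    rcases le_total a b with hab | hab
    · have : (b - a) * s ≤ (b - a) * 1 := by
        apply mul_le_mul_of_nonneg_left hs1 (by linarith)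
      have habs : |a - b| = b - a := by rw [abs_sub_comm]; exact abs_of_nonneg (by linarith)
      linarith
    · have : (b - a) * s ≤ 0 := mul_nonpos_of_nonpos_of_nonneg (by linarith) hs0
      have habs : 0 ≤ |a - b| := abs_nonneg _
      linarith
  have hcont : Continuous t := by
    have : LipschitzWith 1 t := by
      rw [lipschitzWith_iff_dist_le_mul]
      intro a b
      rw [Real.dist_eq, Real.dist_eq, NNReal.coe_one, one_mul]
      rw [abs_le]
      constructor
      · have := hlip b a
        rw [abs_sub_comm] at this
        linarith
      · exact hlip a b
    exact this.continuous
  -- strict antitonicity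
  have hanti : StrictAntiOn t (Set.Icc 0 lmax) := by
    intro x hx y hy hxy
    have h1 : t x = ((Pr x * ρ).trace).re - x * ((Pr x * σ).trace).re := by
      rw [heq x, htr x _ (hPr_psd x)]
    have h1y : t y = ((Pr y * ρ).trace).re - y * ((Pr y * σ).trace).re := by
      rw [heq y, htr y _ (hPr_psd y)]
    have h2 : ((Pr y * ρ).trace).re - x * ((Pr y * σ).trace).re ≤ t x := by
      rw [← htr x _ (hPr_psd y)]
      exact hub x _ (hPr_psd y) (hPr1_psd y)
    set s := ((Pr y * σ).trace).re with hsdef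
    have hs0 := hQσ_nonneg _ (hPr_psd y)
    rcases hs0.lt_or_eq with hspos | hsz
    · -- strictly positive sigma overlap
      have : t y + (y - x) * s ≤ t x := by rw [h1y]; ring_nf; ring_nf at h2; linarith
      have hpos : 0 < (y - x) * s := mul_pos (by linarith) hspos
      linarith
    · -- degenerate case : t y = 0 and t x > 0
      have hs_eq : s = 0 := hsz.symm
      have hρ0 : ((Pr y * ρ).trace).re = 0 := by
        have hub2 : 0 ≤ ((Pr y * ((lmax : ℂ) • σ - ρ)).trace).re := by
          apply (Complex.nonneg_iff.mp (trace_mul_psd_nonneg (hPr_psd y) hmem.2)).1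
        have hexp2 : Pr y * ((lmax : ℂ) • σ - ρ) = (lmax : ℂ) • (Pr y * σ) - Pr y * ρ := by
          rw [Matrix.mul_sub, Matrix.mul_smul]
        rw [hexp2, Matrix.trace_sub, Matrix.trace_smul, Complex.sub_re, smul_eq_mul] at hub2
        have h3 : (Pr y * σ).trace = ((s : ℝ) : ℂ) :=
          nonneg_eq_re _ (trace_mul_psd_nonneg (hPr_psd y) hσ)
        rw [h3, ← Complex.ofReal_mul, Complex.ofReal_re, hs_eq, mul_zero] at hub2
        have hlow := (Complex.nonneg_iff.mp (trace_mul_psd_nonneg (hPr_psd y) hρ)).1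
        linarith
      have hty : t y = 0 := by rw [h1y, hρ0, hs_eq]; ring
      have htx : 0 < t x := htpos x hx.1 (lt_of_lt_of_le hxy hy.2)
      rw [hty]
      exact htx
  refine ⟨hcont.continuousOn, hanti, ?_, ?_, ?_⟩
  · -- value at zero
    have h0 : ρ - ((0 : ℝ) : ℂ) • σ = ρ := by
      simp
    rw [h0, posPartMat_eq hρ.1]
    have : hρ.1.cfc (fun x => max x 0) = hρ.1.cfc (fun x => x) :=
      cfc_congr' hρ.1 (fun i => max_eq_left (hρ.eigenvalues_nonneg i))
    rw [this, cfc_id' hρ.1, hρ1]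
    simp
  · -- value at lmax
    have hle : t lmax ≤ 0 := by
      rw [heq lmax]
      have hswap : Pr lmax * (ρ - (lmax : ℂ) • σ) = -(Pr lmax * ((lmax : ℂ) • σ - ρ)) := by
        rw [← Matrix.mul_neg, neg_sub]
      rw [hswap, Matrix.trace_neg, Complex.neg_re]
      have := (Complex.nonneg_iff.mp (trace_mul_psd_nonneg (hPr_psd lmax) hmem.2)).1
      linarith
    exact le_antisymm hle (htnonneg lmax)
  · -- image
    have ht0 : t 0 = 1 := by
      rw [htdef]
      simp only
      have h0 : ρ - ((0 : ℝ) : ℂ) • σ = ρ := by simp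
      rw [h0, posPartMat_eq hρ.1]
      have : hρ.1.cfc (fun x => max x 0) = hρ.1.cfc (fun x => x) :=
        cfc_congr' hρ.1 (fun i => max_eq_left (hρ.eigenvalues_nonneg i))
      rw [this, cfc_id' hρ.1, hρ1]
      simp
    have htl : t lmax = 0 := by
      have hle : t lmax ≤ 0 := by
        rw [heq lmax]
        have hswap : Pr lmax * (ρ - (lmax : ℂ) • σ) = -(Pr lmax * ((lmax : ℂ) • σ - ρ)) := by
          rw [← Matrix.mul_neg, neg_sub]
        rw [hswap, Matrix.trace_neg, Complex.neg_re]
        have := (Complex.nonneg_iff.mp (trace_mul_psd_nonneg (hPr_psd lmax) hmem.2)).1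
        linarith
      exact le_antisymm hle (htnonneg lmax)
    apply Set.Subset.antisymm
    · rintro z ⟨x, hx, rfl⟩
      constructor
      · rw [← htl]
        rcases eq_or_lt_of_le hx.2 with h | h
        · rw [h]
        · exact (hanti hx (Set.right_mem_Icc.mpr hlmax_nonneg) h).le
      · rw [← ht0]
        rcases eq_or_lt_of_le hx.1 with h | h
        · rw [← h]
        · exact (hanti (Set.left_mem_Icc.mpr hlmax_nonneg) hx h).le
    · have hIV := intermediate_value_Icc' hlmax_nonneg hcont.continuousOn
      rw [ht0, htl] at hIV
      exact hIV


end QComb
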